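/- Let θ₁, ..., θ₆ ∈ (0, π) and set a_j = e^{iθ_j}. Define q₀ = a₁a₄ + a₂a₅ + a₃a₆ + a₁a₂a₆ + a₁a₃a₅ + a₂a₃a₄ + a₄a₅a₆ + a₁a₂a₃a₄a₅a₆, q₁ = -(a₁-a₁⁻¹)(a₄-a₄⁻¹) - (a₂-a₂⁻¹)(a₅-a₅⁻¹) - (a₃-a₃⁻¹)(a₆-a₆⁻¹), q₂ = a₁⁻¹a₄⁻¹ + a₂⁻¹a₅⁻¹ + a₃⁻¹a₆⁻¹ + a₁⁻¹a₂⁻¹a₆⁻¹ + a₁⁻¹a₃⁻¹a₅⁻¹ + a₂⁻¹a₃⁻¹a₄⁻¹ + a₄⁻¹a₅⁻¹a₆⁻¹ + a₁⁻¹a₂⁻¹a₃⁻¹a₄⁻¹a₅⁻¹a₆⁻¹, and let G be the 4×4 symmetric matrix with diagonal entries 1 and off-diagonal entries G₁₂ = -cos θ₁, G₁₃ = -cos θ₂, G₁₄ = -cos θ₆, G₂₃ = -cos θ₃, G₂₄ = -cos θ₅, G₃₄ = -cos θ₄. Then q₁² - 4 q₀ q₂ = 16 det G. -/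

import Mathlib

open scoped Real

lemma cos_as_exp (θ : ℝ) :
    Complex.cos (θ : ℂ) = (Complex.exp (θ * Complex.I) + (Complex.exp (θ * Complex.I))⁻¹) / 2 := by
  rw [Complex.cos, ← Complex.exp_neg]
  ring_nf

set_option maxHeartbeats 4000000 in
theorem discriminant_eq_16_det_gram
    (θ₁ θ₂ θ₃ θ₄ θ₅ θ₆ : ℝ)
    (h₁ : θ₁ ∈ Set.Ioo 0 π) (h₂ : θ₂ ∈ Set.Ioo 0 π) (h₃ : θ₃ ∈ Set.Ioo 0 π)
    (h₄ : θ₄ ∈ Set.Ioo 0 π) (h₅ : θ₅ ∈ Set.Ioo 0 π) (h₆ : θ₆ ∈ Set.Ioo 0 π)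
    (a₁ a₂ a₃ a₄ a₅ a₆ : ℂ)
    (ha₁ : a₁ = Complex.exp (θ₁ * Complex.I)) (ha₂ : a₂ = Complex.exp (θ₂ * Complex.I))
    (ha₃ : a₃ = Complex.exp (θ₃ * Complex.I)) (ha₄ : a₄ = Complex.exp (θ₄ * Complex.I))
    (ha₅ : a₅ = Complex.exp (θ₅ * Complex.I)) (ha₆ : a₆ = Complex.exp (θ₆ * Complex.I))
    (q₀ q₁ q₂ : ℂ)
    (hq₀ : q₀ = a₁*a₄ + a₂*a₅ + a₃*a₆ + a₁*a₂*a₆ + a₁*a₃*a₅ + a₂*a₃*a₄ + a₄*a₅*a₆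
      + a₁*a₂*a₃*a₄*a₅*a₆)
    (hq₁ : q₁ = -(a₁ - a₁⁻¹)*(a₄ - a₄⁻¹) - (a₂ - a₂⁻¹)*(a₅ - a₅⁻¹) - (a₃ - a₃⁻¹)*(a₆ - a₆⁻¹))
    (hq₂ : q₂ = a₁⁻¹*a₄⁻¹ + a₂⁻¹*a₅⁻¹ + a₃⁻¹*a₆⁻¹ + a₁⁻¹*a₂⁻¹*a₆⁻¹ + a₁⁻¹*a₃⁻¹*a₅⁻¹
      + a₂⁻¹*a₃⁻¹*a₄⁻¹ + a₄⁻¹*a₅⁻¹*a₆⁻¹ + a₁⁻¹*a₂⁻¹*a₃⁻¹*a₄⁻¹*a₅⁻¹*a₆⁻¹)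
    (G : Matrix (Fin 4) (Fin 4) ℝ)
    (hG : G = !![1, -Real.cos θ₁, -Real.cos θ₂, -Real.cos θ₆;
                 -Real.cos θ₁, 1, -Real.cos θ₃, -Real.cos θ₅;
                 -Real.cos θ₂, -Real.cos θ₃, 1, -Real.cos θ₄;
                 -Real.cos θ₆, -Real.cos θ₅, -Real.cos θ₄, 1]) :
    q₁ ^ 2 - 4 * q₀ * q₂ = 16 * (G.det : ℂ) := by
  have n₁ : a₁ ≠ 0 := ha₁ ▸ Complex.exp_ne_zero _
  have n₂ : a₂ ≠ 0 := ha₂ ▸ Complex.exp_ne_zero _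
  have n₃ : a₃ ≠ 0 := ha₃ ▸ Complex.exp_ne_zero _
  have n₄ : a₄ ≠ 0 := ha₄ ▸ Complex.exp_ne_zero _
  have n₅ : a₅ ≠ 0 := ha₅ ▸ Complex.exp_ne_zero _
  have n₆ : a₆ ≠ 0 := ha₆ ▸ Complex.exp_ne_zero _
  have c₁ : Complex.cos ((θ₁:ℝ) : ℂ) = (a₁ + a₁⁻¹) / 2 := by rw [ha₁]; exact cos_as_exp θ₁
  have c₂ : Complex.cos ((θ₂:ℝ) : ℂ) = (a₂ + a₂⁻¹) / 2 := by rw [ha₂]; exact cos_as_exp θ₂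
  have c₃ : Complex.cos ((θ₃:ℝ) : ℂ) = (a₃ + a₃⁻¹) / 2 := by rw [ha₃]; exact cos_as_exp θ₃
  have c₄ : Complex.cos ((θ₄:ℝ) : ℂ) = (a₄ + a₄⁻¹) / 2 := by rw [ha₄]; exact cos_as_exp θ₄
  have c₅ : Complex.cos ((θ₅:ℝ) : ℂ) = (a₅ + a₅⁻¹) / 2 := by rw [ha₅]; exact cos_as_exp θ₅
  have c₆ : Complex.cos ((θ₆:ℝ) : ℂ) = (a₆ + a₆⁻¹) / 2 := by rw [ha₆]; exact cos_as_exp θ₆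
  subst hq₀ hq₁ hq₂
  have hdet : G.det =
      1 - Real.cos θ₁^2 - Real.cos θ₂^2 - Real.cos θ₃^2 - Real.cos θ₄^2 - Real.cos θ₅^2
        - Real.cos θ₆^2
      - 2*(Real.cos θ₁*Real.cos θ₂*Real.cos θ₃ + Real.cos θ₁*Real.cos θ₅*Real.cos θ₆
        + Real.cos θ₂*Real.cos θ₄*Real.cos θ₆ + Real.cos θ₃*Real.cos θ₄*Real.cos θ₅)
      + Real.cos θ₁^2*Real.cos θ₄^2 + Real.cos θ₂^2*Real.cos θ₅^2 + Real.cos θ₃^2*Real.cos θ₆^2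
      - 2*(Real.cos θ₁*Real.cos θ₄*Real.cos θ₂*Real.cos θ₅
        + Real.cos θ₂*Real.cos θ₅*Real.cos θ₃*Real.cos θ₆
        + Real.cos θ₁*Real.cos θ₄*Real.cos θ₃*Real.cos θ₆) := by
    subst hG
    simp [Matrix.det_succ_row_zero, Fin.sum_univ_succ, Fin.succAbove, Fin.castSucc, Fin.castAdd, Fin.castLE]
    ring
  rw [hdet]
  push_cast
  rw [c₁, c₂, c₃, c₄, c₅, c₆]
  have m₁ := mul_inv_cancel₀ n₁
  have m₂ := mul_inv_cancel₀ n₂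
  have m₃ := mul_inv_cancel₀ n₃
  have m₄ := mul_inv_cancel₀ n₄
  have m₅ := mul_inv_cancel₀ n₅
  have m₆ := mul_inv_cancel₀ n₆
  linear_combination
    ((8 : ℂ) + (-4 : ℂ)*a₄⁻¹^2 + (-4 : ℂ)*a₄*a₄⁻¹ + (-4 : ℂ)*a₄*a₃⁻¹*a₅⁻¹ + (-4 : ℂ)*a₄*a₂⁻¹*a₆⁻¹ + (-4 : ℂ)*a₄*a₂⁻¹*a₃⁻¹*a₄⁻¹*a₅⁻¹*a₆⁻¹ + (-4 : ℂ)*a₄^2 + (-4 : ℂ)*a₃*a₅*a₄⁻¹ + (-4 : ℂ)*a₃*a₅*a₃⁻¹*a₅⁻¹ + (-4 : ℂ)*a₃*a₅*a₂⁻¹*a₆⁻¹ + (-4 : ℂ)*a₃*a₅*a₂⁻¹*a₃⁻¹*a₄⁻¹*a₅⁻¹*a₆⁻¹ + (-4 : ℂ)*a₂*a₆*a₄⁻¹ + (-4 : ℂ)*a₂*a₆*a₃⁻¹*a₅⁻¹ + (-4 : ℂ)*a₂*a₆*a₂⁻¹*a₆⁻¹ + (-4 : ℂ)*a₂*a₆*a₂⁻¹*a₃⁻¹*a₄⁻¹*a₅⁻¹*a₆⁻¹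 + (-4 : ℂ)*a₂*a₃*a₄*a₅*a₆*a₄⁻¹ + (-4 : ℂ)*a₂*a₃*a₄*a₅*a₆*a₃⁻¹*a₅⁻¹ + (-4 : ℂ)*a₂*a₃*a₄*a₅*a₆*a₂⁻¹*a₆⁻¹ + (-4 : ℂ)*a₂*a₃*a₄*a₅*a₆*a₂⁻¹*a₃⁻¹*a₄⁻¹*a₅⁻¹*a₆⁻¹) * m₁ +
    ((8 : ℂ) + (-4 : ℂ)*a₅⁻¹^2 + (-4 : ℂ)*a₆*a₆⁻¹ + (-4 : ℂ)*a₆*a₃⁻¹*a₄⁻¹*a₅⁻¹*a₆⁻¹ + (-4 : ℂ)*a₅*a₅⁻¹ + (-4 : ℂ)*a₅*a₃⁻¹*a₄⁻¹ + (-4 : ℂ)*a₅*a₁⁻¹*a₆⁻¹ + (-4 : ℂ)*a₅*a₁⁻¹*a₃⁻¹*a₄⁻¹*a₅⁻¹*a₆⁻¹ + (-4 : ℂ)*a₅^2 + (-4 : ℂ)*a₃*a₄*a₅⁻¹ + (-4 : ℂ)*a₃*a₄*a₃⁻¹*a₄⁻¹ + (-4 : ℂ)*a₃*a₄*a₁⁻¹*a₆⁻¹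 + (-4 : ℂ)*a₃*a₄*a₁⁻¹*a₃⁻¹*a₄⁻¹*a₅⁻¹*a₆⁻¹ + (-4 : ℂ)*a₃*a₄*a₅*a₆*a₆⁻¹ + (-4 : ℂ)*a₃*a₄*a₅*a₆*a₃⁻¹*a₄⁻¹*a₅⁻¹*a₆⁻¹ + (-4 : ℂ)*a₁*a₆*a₅⁻¹ + (-4 : ℂ)*a₁*a₆*a₃⁻¹*a₄⁻¹ + (-4 : ℂ)*a₁*a₃*a₄*a₅*a₆*a₅⁻¹ + (-4 : ℂ)*a₁*a₃*a₄*a₅*a₆*a₃⁻¹*a₄⁻¹) * m₂ +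
    ((8 : ℂ) + (-4 : ℂ)*a₆⁻¹^2 + (-4 : ℂ)*a₆*a₆⁻¹ + (-4 : ℂ)*a₆*a₂⁻¹*a₄⁻¹ + (-4 : ℂ)*a₆*a₁⁻¹*a₅⁻¹ + (-4 : ℂ)*a₆*a₁⁻¹*a₂⁻¹*a₄⁻¹*a₅⁻¹*a₆⁻¹ + (-4 : ℂ)*a₆^2 + (-4 : ℂ)*a₅*a₅⁻¹ + (-4 : ℂ)*a₅*a₂⁻¹*a₄⁻¹*a₅⁻¹*a₆⁻¹ + (-4 : ℂ)*a₄*a₄⁻¹ + (-4 : ℂ)*a₄*a₁⁻¹*a₄⁻¹*a₅⁻¹*a₆⁻¹ + (-4 : ℂ)*a₄*a₅*a₆*a₄⁻¹*a₅⁻¹*a₆⁻¹ + (-4 : ℂ)*a₂*a₄*a₆⁻¹ + (-4 : ℂ)*a₂*a₄*a₁⁻¹*a₅⁻¹ + (-4 : ℂ)*a₂*a₄*a₅*a₆*a₅⁻¹ + (-4 : ℂ)*a₁*a₅*a₆⁻¹ + (-4 : ℂ)*a₁*a₅*a₂⁻¹*a₄⁻¹ + (-4 : ℂ)*a₁*a₄*a₅*a₆*a₄⁻¹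 + (-4 : ℂ)*a₁*a₂*a₄*a₅*a₆*a₆⁻¹) * m₃ +
    ((-4 : ℂ)*a₂⁻¹*a₃⁻¹*a₅⁻¹*a₆⁻¹ + (-4 : ℂ)*a₁⁻¹*a₅⁻¹*a₆⁻¹ + (-4 : ℂ)*a₁⁻¹^2 + (-8 : ℂ)*a₅*a₆*a₅⁻¹*a₆⁻¹ + (-4 : ℂ)*a₅*a₆*a₂⁻¹*a₃⁻¹ + (-4 : ℂ)*a₅*a₆*a₁⁻¹ + (-4 : ℂ)*a₅*a₆*a₁⁻¹*a₂⁻¹*a₃⁻¹*a₅⁻¹*a₆⁻¹ + (-4 : ℂ)*a₂*a₃*a₅⁻¹*a₆⁻¹ + (-4 : ℂ)*a₂*a₃*a₁⁻¹ + (-4 : ℂ)*a₂*a₃*a₅*a₆ + (-4 : ℂ)*a₁*a₅⁻¹*a₆⁻¹ + (-4 : ℂ)*a₁*a₂⁻¹*a₃⁻¹ + (-4 : ℂ)*a₁*a₅*a₆ + (-4 : ℂ)*a₁*a₂*a₃*a₅*a₆*a₅⁻¹*a₆⁻¹ + (-4 : ℂ)*a₁^2) * m₄ +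
    ((-4 : ℂ)*a₂⁻¹*a₄⁻¹*a₆⁻¹ + (-4 : ℂ)*a₂⁻¹^2 + (-4 : ℂ)*a₁⁻¹*a₃⁻¹*a₄⁻¹*a₆⁻¹ + (-8 : ℂ)*a₆*a₆⁻¹ + (-4 : ℂ)*a₆*a₁⁻¹*a₂⁻¹*a₃⁻¹*a₆⁻¹ + (-4 : ℂ)*a₄*a₆*a₂⁻¹ + (-4 : ℂ)*a₄*a₆*a₁⁻¹*a₃⁻¹ + (-4 : ℂ)*a₂*a₄⁻¹*a₆⁻¹ + (-4 : ℂ)*a₂*a₁⁻¹*a₃⁻¹ + (-4 : ℂ)*a₂*a₄*a₆ + (-4 : ℂ)*a₂^2 + (-4 : ℂ)*a₁*a₃*a₄⁻¹*a₆⁻¹ + (-4 : ℂ)*a₁*a₃*a₂⁻¹ + (-4 : ℂ)*a₁*a₃*a₄*a₆ + (-4 : ℂ)*a₁*a₂*a₃*a₆*a₆⁻¹) * m₅ +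
    ((-8 : ℂ) + (-4 : ℂ)*a₃⁻¹*a₄⁻¹*a₅⁻¹ + (-4 : ℂ)*a₃⁻¹^2 + (-4 : ℂ)*a₁⁻¹*a₂⁻¹*a₄⁻¹*a₅⁻¹ + (-4 : ℂ)*a₁⁻¹*a₂⁻¹*a₃⁻¹ + (-4 : ℂ)*a₄*a₅*a₃⁻¹ + (-4 : ℂ)*a₄*a₅*a₁⁻¹*a₂⁻¹ + (-4 : ℂ)*a₃*a₄⁻¹*a₅⁻¹ + (-4 : ℂ)*a₃*a₁⁻¹*a₂⁻¹ + (-4 : ℂ)*a₃*a₄*a₅ + (-4 : ℂ)*a₃^2 + (-4 : ℂ)*a₁*a₂*a₄⁻¹*a₅⁻¹ + (-4 : ℂ)*a₁*a₂*a₃⁻¹ + (-4 : ℂ)*a₁*a₂*a₄*a₅ + (-4 : ℂ)*a₁*a₂*a₃) * m₆
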